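/- Let k be a positive integer and let (A,B) be a real 2k×2k pencil such that tA + uB is invertible for every (t,u) ∈ ℝ²\{(0,0)}. If (A',B') ∈ B_{2k,2k−1} attains the minimum of ‖(A,B) − (C,D)‖ over all (C,D) ∈ B_{2k,2k−1}, then (A',B') has minimal ranks ρ(A',B') = (2k, 2k−1); that is, every best approximation of (A,B) on B_{2k,2k−1} lies in B_{2k,2k−1} \ (B_{2k,2k−2} ∪ B_{2k−1,2k−1}). -/

import Mathlib

open Matrix

/-- `(A', B')` lies in the orbit of the pencil `(A, B)` under the action of
`GL_m(F) × GL_n(F) × GL_2(F)` given by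
`(P, U, T) · (A, B) = (P (t₁₁ A + t₁₂ B) Uᵀ, P (t₂₁ A + t₂₂ B) Uᵀ)`. -/
def InOrbit {F : Type*} [Field F] {m n : ℕ}
    (A B A' B' : Matrix (Fin m) (Fin n) F) : Prop :=
  ∃ (P : Matrix (Fin m) (Fin m) F) (U : Matrix (Fin n) (Fin n) F)
    (T : Matrix (Fin 2) (Fin 2) F),
    IsUnit P.det ∧ IsUnit U.det ∧ IsUnit T.det ∧
    A' = P * (T 0 0 • A + T 0 1 • B) * U.transpose ∧
    B' = P * (T 1 0 • A + T 1 1 • B) * U.transpose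

/-- The pencil `(A, B)` belongs to `B_{r,s}`: some pencil in its orbit has
first coefficient of rank `≤ r` and second coefficient of rank `≤ s`. -/
def InBset {F : Type*} [Field F] {m n : ℕ} (r s : ℕ)
    (A B : Matrix (Fin m) (Fin n) F) : Prop :=
  ∃ A' B', InOrbit A B A' B' ∧ A'.rank ≤ r ∧ B'.rank ≤ s


/-- The pencil `(A, B)` has minimal ranks `ρ(A, B) = (r, s)`:
`s` is the minimum of `rank (t A + u B)` over `(t, u) ≠ (0, 0)`, attained at
some `(t₀, u₀)`, and `r` is the minimum of `rank (t A + u B)` over `(t, u)`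
outside the span of the minimizer `(t₀, u₀)`. -/
def MinRanksAre {F : Type*} [Field F] {m n : ℕ}
    (A B : Matrix (Fin m) (Fin n) F) (r s : ℕ) : Prop :=
  ∃ t₀ u₀ : F, (t₀, u₀) ≠ 0 ∧ (t₀ • A + u₀ • B).rank = s ∧
    (∀ t u : F, (t, u) ≠ 0 → s ≤ (t • A + u • B).rank) ∧
    (∃ t₁ u₁ : F, ((t₁, u₁) : F × F) ∉ Submodule.span F {((t₀, u₀) : F × F)} ∧
      (t₁ • A + u₁ • B).rank = r) ∧
    (∀ t u : F, ((t, u) : F × F) ∉ Submodule.span F {((t₀, u₀) : F × F)} →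
      r ≤ (t • A + u • B).rank)

/-- Squared Frobenius norm of a matrix. -/
noncomputable def frobSq {m n : ℕ} (A : Matrix (Fin m) (Fin n) ℝ) : ℝ :=
  ∑ i, ∑ j, ‖A i j‖ ^ 2

/-- Distance between two pencils induced by the norm
`‖(A, B)‖ = √(‖A‖_F² + ‖B‖_F²)`. -/
noncomputable def pdist {m n : ℕ}
    (p q : Matrix (Fin m) (Fin n) ℝ × Matrix (Fin m) (Fin n) ℝ) : ℝ :=
  Real.sqrt (frobSq (p.1 - q.1) + frobSq (p.2 - q.2))

/-! ### Auxiliary rank lemmas -/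

lemma rank_add_le' {m n : ℕ} (A B : Matrix (Fin m) (Fin n) ℝ) :
    (A + B).rank ≤ A.rank + B.rank := by
  unfold Matrix.rank
  rw [Matrix.mulVecLin_add]
  have hle : LinearMap.range (A.mulVecLin + B.mulVecLin) ≤
      LinearMap.range A.mulVecLin ⊔ LinearMap.range B.mulVecLin := by
    rintro x ⟨v, rfl⟩
    exact Submodule.add_mem_sup ⟨v, rfl⟩ ⟨v, rfl⟩
  calc Module.finrank ℝ (LinearMap.range (A.mulVecLin + B.mulVecLin))
      ≤ Module.finrank ℝ ↥(LinearMap.range A.mulVecLin ⊔ LinearMap.range B.mulVecLin) :=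
        Submodule.finrank_mono hle
    _ ≤ _ := Submodule.finrank_add_le_finrank_add_finrank _ _

lemma rank_smul_eq {n : ℕ} (c : ℝ) (hc : c ≠ 0) (A : Matrix (Fin n) (Fin n) ℝ) :
    (c • A).rank = A.rank := by
  have h : c • A = (c • (1 : Matrix (Fin n) (Fin n) ℝ)) * A := by
    rw [Matrix.smul_mul, Matrix.one_mul]
  have hd : IsUnit ((c • (1 : Matrix (Fin n) (Fin n) ℝ))).det := by
    rw [Matrix.det_smul, Matrix.det_one, mul_one]
    exact (isUnit_iff_ne_zero).2 (pow_ne_zero _ hc)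
  rw [h, Matrix.rank_mul_eq_right_of_isUnit_det _ _ hd]

lemma rank_stdBasisMatrix_le {m n : ℕ} (i : Fin m) (j : Fin n) (c : ℝ) :
    (Matrix.single i j c).rank ≤ 1 := by
  have h : Matrix.single i j c =
      (Matrix.single i (0 : Fin 1) (1:ℝ)) * (Matrix.single (0 : Fin 1) j c) := by
    ext a b
    simp only [Matrix.mul_apply, Matrix.single, Matrix.of_apply]
    by_cases h1 : i = a <;> by_cases h2 : j = b <;> simp [h1, h2]
  rw [h]
  calc ((Matrix.single i (0:Fin 1) (1:ℝ)) * (Matrix.single (0:Fin 1) j c)).rank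
      ≤ (Matrix.single (0:Fin 1) j c).rank := Matrix.rank_mul_le_right _ _
    _ ≤ Fintype.card (Fin 1) := Matrix.rank_le_card_height _
    _ = 1 := by simp

/-! ### Auxiliary frobSq lemmas -/

lemma frobSq_eq {m n : ℕ} (X : Matrix (Fin m) (Fin n) ℝ) :
    frobSq X = ∑ i, ∑ j, (X i j)^2 := by
  simp [frobSq, Real.norm_eq_abs, sq_abs]

lemma frobSq_nonneg {m n : ℕ} (X : Matrix (Fin m) (Fin n) ℝ) : 0 ≤ frobSq X := by
  rw [frobSq_eq]
  exact Finset.sum_nonneg fun i _ => Finset.sum_nonneg fun j _ => sq_nonneg _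

lemma frobSq_zero {m n : ℕ} : frobSq (0 : Matrix (Fin m) (Fin n) ℝ) = 0 := by
  simp [frobSq_eq]

lemma frobSq_pos {m n : ℕ} (X : Matrix (Fin m) (Fin n) ℝ) (hX : X ≠ 0) : 0 < frobSq X := by
  obtain ⟨i, j, hij⟩ : ∃ i j, X i j ≠ 0 := by
    by_contra h
    push_neg at h
    exact hX (by ext i j; simp [h i j])
  rw [frobSq_eq]
  have h1 : (X i j)^2 ≤ ∑ j', (X i j')^2 :=
    Finset.single_le_sum (f := fun j' => (X i j')^2) (fun j' _ => sq_nonneg _)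
      (Finset.mem_univ j)
  have h2 : ∑ j', (X i j')^2 ≤ ∑ i', ∑ j', (X i' j')^2 :=
    Finset.single_le_sum (f := fun i' => ∑ j', (X i' j')^2)
      (fun i' _ => Finset.sum_nonneg fun j' _ => sq_nonneg _) (Finset.mem_univ i)
  have := pow_pos (abs_pos.2 hij) 2
  nlinarith [sq_abs (X i j)]

lemma frobSq_smul {m n : ℕ} (c : ℝ) (X : Matrix (Fin m) (Fin n) ℝ) :
    frobSq (c • X) = c^2 * frobSq X := by
  simp only [frobSq_eq, Matrix.smul_apply, smul_eq_mul, mul_pow, Finset.mul_sum]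

lemma frobSq_rot {m n : ℕ} (c s : ℝ) (h : c^2 + s^2 = 1) (X Y : Matrix (Fin m) (Fin n) ℝ) :
    frobSq (c • X + (-s) • Y) + frobSq (s • X + c • Y) = frobSq X + frobSq Y := by
  simp only [frobSq_eq, ← Finset.sum_add_distrib]
  refine Finset.sum_congr rfl fun i _ => Finset.sum_congr rfl fun j _ => ?_
  simp only [Matrix.add_apply, Matrix.smul_apply, smul_eq_mul]
  nlinarith [sq_nonneg (X i j), sq_nonneg (Y i j)]

lemma frobSq_sub_entry {m n : ℕ} (M : Matrix (Fin m) (Fin n) ℝ) (i : Fin m) (j : Fin n) :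
    frobSq (M - (M i j) • Matrix.single i j (1:ℝ)) = frobSq M - (M i j)^2 := by
  simp only [frobSq_eq]
  have key : ∀ (i' : Fin m) (j' : Fin n),
      ((M - (M i j) • Matrix.single i j (1:ℝ)) i' j')^2
      = (M i' j')^2 - (if i = i' ∧ j = j' then (M i j)^2 else 0) := by
    intro i' j'
    simp only [Matrix.sub_apply, Matrix.smul_apply, Matrix.single, Matrix.of_apply,
      smul_eq_mul]
    by_cases h1 : i = i' <;> by_cases h2 : j = j' <;> simp [h1, h2]
  simp only [key, Finset.sum_sub_distrib]
  congr 1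
  simp [Finset.sum_ite_eq, ite_and]

lemma dist_rot {m n : ℕ} (c s : ℝ) (hcs : c^2 + s^2 = 1)
    (A B Gn Hn : Matrix (Fin m) (Fin n) ℝ) :
    frobSq (A - (c • Gn - s • Hn)) + frobSq (B - (s • Gn + c • Hn))
      = frobSq ((c • A + s • B) - Gn) + frobSq (((-s) • A + c • B) - Hn) := by
  have e1 : A - (c • Gn - s • Hn)
      = c • ((c • A + s • B) - Gn) + (-s) • (((-s) • A + c • B) - Hn) := by
    ext i j
    simp only [Matrix.sub_apply, Matrix.add_apply, Matrix.smul_apply, smul_eq_mul]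
    linear_combination (-(A i j)) * hcs
  have e2 : B - (s • Gn + c • Hn)
      = s • ((c • A + s • B) - Gn) + c • (((-s) • A + c • B) - Hn) := by
    ext i j
    simp only [Matrix.sub_apply, Matrix.add_apply, Matrix.smul_apply, smul_eq_mul]
    linear_combination (-(B i j)) * hcs
  rw [e1, e2, frobSq_rot c s hcs]

/-! ### Auxiliary InBset lemmas -/

lemma inBset_of_dir {n : ℕ} (C D : Matrix (Fin n) (Fin n) ℝ) (s : ℕ) (t u : ℝ)
    (htu : ¬(t = 0 ∧ u = 0)) (h : (t • C + u • D).rank ≤ s) : InBset n s C D := by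
  refine ⟨(-u) • C + t • D, t • C + u • D, ⟨1, 1, !![-u, t; t, u], ?_, ?_, ?_, ?_, ?_⟩, ?_, h⟩
  · simp
  · simp
  · have : (!![-u, t; t, u] : Matrix (Fin 2) (Fin 2) ℝ).det = -(t^2 + u^2) := by
      simp [Matrix.det_fin_two_of]; ring
    rw [this, isUnit_iff_ne_zero]
    intro hz
    have h1 : t ^ 2 + u ^ 2 = 0 := by linarith [neg_eq_zero.1 hz]
    exact htu ⟨by nlinarith [sq_nonneg t, sq_nonneg u], by nlinarith [sq_nonneg t, sq_nonneg u]⟩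
  · simp
  · simp
  · exact le_trans (Matrix.rank_le_card_height _) (by simp)

lemma inBset_dirs {m n r s : ℕ} (C D : Matrix (Fin m) (Fin n) ℝ) (h : InBset r s C D) :
    ∃ t u t' u' : ℝ, t * u' - u * t' ≠ 0 ∧ (t • C + u • D).rank ≤ r ∧
      (t' • C + u' • D).rank ≤ s := by
  obtain ⟨A'', B'', ⟨P, U, T, hP, hU, hT, hA, hB⟩, hr, hs⟩ := h
  refine ⟨T 0 0, T 0 1, T 1 0, T 1 1, ?_, ?_, ?_⟩
  · rw [Matrix.det_fin_two] at hT
    intro hz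
    rw [hz] at hT
    simp at hT
  · have : A''.rank = (T 0 0 • C + T 0 1 • D).rank := by
      rw [hA, Matrix.rank_mul_eq_left_of_isUnit_det _ _ (by rwa [Matrix.det_transpose]),
        Matrix.rank_mul_eq_right_of_isUnit_det _ _ hP]
    rwa [this] at hr
  · have : B''.rank = (T 1 0 • C + T 1 1 • D).rank := by
      rw [hB, Matrix.rank_mul_eq_left_of_isUnit_det _ _ (by rwa [Matrix.det_transpose]),
        Matrix.rank_mul_eq_right_of_isUnit_det _ _ hP]
    rwa [this] at hs

/-! ### The two main improvement lemmas -/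

section Improve

variable {k : ℕ} (hk : 0 < k)
variable (A B A' B' : Matrix (Fin (2 * k)) (Fin (2 * k)) ℝ)

/-- Setup of rotated coordinates: given a direction `(t, u) ≠ 0`, we produce the
normalized `(c, s)`. -/
lemma unit_dir (t u : ℝ) (htu : ¬(t = 0 ∧ u = 0)) :
    ∃ c s : ℝ, c^2 + s^2 = 1 ∧ ∃ ν : ℝ, ν ≠ 0 ∧ c = t / ν ∧ s = u / ν := by
  have hpos : 0 < t^2 + u^2 := by
    rcases not_and_or.1 htu with h | h
    · have : 0 < t^2 := by positivity
      nlinarith [sq_nonneg u]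
    · have : 0 < u^2 := by positivity
      nlinarith [sq_nonneg t]
  have hn : 0 < Real.sqrt (t^2 + u^2) := Real.sqrt_pos.2 hpos
  have hn2 : (Real.sqrt (t^2 + u^2))^2 = t^2 + u^2 := Real.sq_sqrt hpos.le
  refine ⟨t / Real.sqrt (t^2+u^2), u / Real.sqrt (t^2+u^2), ?_, Real.sqrt (t^2+u^2),
    hn.ne', rfl, rfl⟩
  rw [div_pow, div_pow, ← add_div]
  rw [Real.sq_sqrt hpos.le] at hn2 ⊢
  exact div_self (by positivity)
/-- No direction of a best approximation can have rank `≤ 2k - 2`. -/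
lemma lemA (hk : 0 < k)
    (hC : ∀ t u : ℝ, (t, u) ≠ 0 → IsUnit (t • A + u • B).det)
    (hkey : ∀ C D : Matrix (Fin (2 * k)) (Fin (2 * k)) ℝ,
      InBset (2 * k) (2 * k - 1) C D →
      frobSq (A - A') + frobSq (B - B') ≤ frobSq (A - C) + frobSq (B - D))
    (t u : ℝ) (htu : ¬(t = 0 ∧ u = 0)) :
    ¬ (t • A' + u • B').rank ≤ 2 * k - 2 := by
  intro hle
  obtain ⟨c, s, hcs, ν, hν, hcdef, hsdef⟩ := unit_dir t u htu
  have hcs0 : ¬(c = 0 ∧ s = 0) := by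
    rintro ⟨h1, h2⟩
    rw [h1, h2] at hcs
    norm_num at hcs
  set G' := c • A' + s • B' with hG'
  set H' := (-s) • A' + c • B' with hH'
  set G := c • A + s • B with hG
  set H := (-s) • A + c • B with hH
  -- rank of G'
  have hG'rank : G'.rank ≤ 2 * k - 2 := by
    have he : G' = ν⁻¹ • (t • A' + u • B') := by
      rw [hG', hcdef, hsdef]
      ext i j
      simp only [Matrix.add_apply, Matrix.smul_apply, smul_eq_mul]
      field_simp
    rw [he, rank_smul_eq _ (inv_ne_zero hν)]
    exact hle
  -- G is invertible
  have hGdet : IsUnit G.det := hC c s (fun hz => hcs0 (Prod.mk_eq_zero.1 hz))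
  have hGrank : G.rank = 2 * k := by
    rw [Matrix.rank_of_isUnit G ((Matrix.isUnit_iff_isUnit_det G).2 hGdet)]
    simp
  -- E := G - G' is nonzero
  have hE : G - G' ≠ 0 := by
    intro h
    have : G = G' := sub_eq_zero.1 h
    rw [this] at hGrank
    have := hG'rank
    omega
  obtain ⟨i, j, hij⟩ : ∃ i j, (G - G') i j ≠ 0 := by
    by_contra h
    push_neg at h
    exact hE (by ext i j; simp [h i j])
  set e := (G - G') i j with he
  set R := e • Matrix.single i j (1:ℝ) with hR
  -- candidate
  set Gn := G' + R with hGn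
  set C := c • Gn - s • H with hCdef
  set D := s • Gn + c • H with hDdef
  have hmemb : InBset (2 * k) (2 * k - 1) C D := by
    apply inBset_of_dir C D _ c s hcs0
    have hcomb : c • C + s • D = Gn := by
      rw [hCdef, hDdef]
      ext i' j'
      simp only [Matrix.add_apply, Matrix.sub_apply, Matrix.smul_apply, smul_eq_mul]
      linear_combination (Gn i' j') * hcs
    rw [hcomb, hGn]
    calc (G' + R).rank ≤ G'.rank + R.rank := rank_add_le' _ _
      _ ≤ (2 * k - 2) + 1 := by
          apply add_le_add hG'rank
          rw [hR, rank_smul_eq _ hij]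
          exact rank_stdBasisMatrix_le i j 1
      _ ≤ 2 * k - 1 := by omega
  -- distances
  have hold : frobSq (A - A') + frobSq (B - B') = frobSq (G - G') + frobSq (H - H') := by
    have hA' : A' = c • G' - s • H' := by
      rw [hG', hH']
      ext i' j'
      simp only [Matrix.sub_apply, Matrix.add_apply, Matrix.smul_apply, smul_eq_mul]
      linear_combination (-(A' i' j')) * hcs
    have hB' : B' = s • G' + c • H' := by
      rw [hG', hH']
      ext i' j'
      simp only [Matrix.sub_apply, Matrix.add_apply, Matrix.smul_apply, smul_eq_mul]
      linear_combination (-(B' i' j')) * hcs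
    calc frobSq (A - A') + frobSq (B - B')
        = frobSq (A - (c • G' - s • H')) + frobSq (B - (s • G' + c • H')) := by
          rw [← hA', ← hB']
      _ = frobSq (G - G') + frobSq (H - H') := dist_rot c s hcs A B G' H'
  have hnew : frobSq (A - C) + frobSq (B - D) = frobSq (G - G') - e^2 := by
    calc frobSq (A - C) + frobSq (B - D)
        = frobSq (G - Gn) + frobSq (H - H) := dist_rot c s hcs A B Gn H
      _ = frobSq ((G - G') - R) + 0 := by rw [sub_self, frobSq_zero, sub_add_eq_sub_sub]
      _ = frobSq (G - G') - e^2 := by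
          rw [add_zero, hR, he, frobSq_sub_entry]
  have hkey' := hkey C D hmemb
  rw [hold, hnew] at hkey'
  have h0 : 0 ≤ frobSq (H - H') := frobSq_nonneg _
  have he2 : 0 < e^2 := by positivity
  linarith

end Improve

section ImproveB

variable {k : ℕ}
variable (A B A' B' : Matrix (Fin (2 * k)) (Fin (2 * k)) ℝ)

/-- A best approximation cannot have two independent rank-deficient directions. -/
lemma lemB (hk : 0 < k)
    (hC : ∀ t u : ℝ, (t, u) ≠ 0 → IsUnit (t • A + u • B).det)
    (hkey : ∀ C D : Matrix (Fin (2 * k)) (Fin (2 * k)) ℝ,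
      InBset (2 * k) (2 * k - 1) C D →
      frobSq (A - A') + frobSq (B - B') ≤ frobSq (A - C) + frobSq (B - D))
    (t u t' u' : ℝ) (hcross : t * u' - u * t' ≠ 0)
    (h1 : (t • A' + u • B').rank ≤ 2 * k - 1)
    (h2 : (t' • A' + u' • B').rank ≤ 2 * k - 1) : False := by
  have htu : ¬(t = 0 ∧ u = 0) := by rintro ⟨rfl, rfl⟩; simp at hcross
  have ht'u' : ¬(t' = 0 ∧ u' = 0) := by rintro ⟨rfl, rfl⟩; simp at hcross
  obtain ⟨c, s, hcs, ν, hν, hcdef, hsdef⟩ := unit_dir t u htu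
  have hcs0 : ¬(c = 0 ∧ s = 0) := by
    rintro ⟨hc1, hc2⟩
    rw [hc1, hc2] at hcs
    norm_num at hcs
  set G' := c • A' + s • B' with hG'
  set H' := (-s) • A' + c • B' with hH'
  set G := c • A + s • B with hG
  set H := (-s) • A + c • B with hH
  have hG'rank : G'.rank ≤ 2 * k - 1 := by
    have he : G' = ν⁻¹ • (t • A' + u • B') := by
      rw [hG', hcdef, hsdef]
      ext i j
      simp only [Matrix.add_apply, Matrix.smul_apply, smul_eq_mul]
      field_simp
    rw [he, rank_smul_eq _ (inv_ne_zero hν)]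
    exact h1
  have hGdet : IsUnit G.det := hC c s (fun hz => hcs0 (Prod.mk_eq_zero.1 hz))
  have hGrank : G.rank = 2 * k := by
    rw [Matrix.rank_of_isUnit G ((Matrix.isUnit_iff_isUnit_det G).2 hGdet)]
    simp
  have hE : G - G' ≠ 0 := by
    intro h
    have h' : G = G' := sub_eq_zero.1 h
    rw [h'] at hGrank
    have := hG'rank
    omega
  set α := t' * c + u' * s with hα
  set β := -(t' * s) + u' * c with hβdef
  have hβ : β ≠ 0 := by
    have hb : β = (t * u' - u * t') / ν := by
      rw [hβdef, hcdef, hsdef]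
      field_simp
      ring
    rw [hb]
    exact div_ne_zero hcross hν
  have hG'H' : α • G' + β • H' = t' • A' + u' • B' := by
    rw [hα, hβdef, hG', hH']
    ext i j
    simp only [Matrix.add_apply, Matrix.smul_apply, smul_eq_mul]
    linear_combination (t' * A' i j + u' * B' i j) * hcs
  -- old distance in rotated coordinates
  have hold : frobSq (A - A') + frobSq (B - B') = frobSq (G - G') + frobSq (H - H') := by
    have hA' : A' = c • G' - s • H' := by
      rw [hG', hH']
      ext i' j'
      simp only [Matrix.sub_apply, Matrix.add_apply, Matrix.smul_apply, smul_eq_mul]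
      linear_combination (-(A' i' j')) * hcs
    have hB' : B' = s • G' + c • H' := by
      rw [hG', hH']
      ext i' j'
      simp only [Matrix.sub_apply, Matrix.add_apply, Matrix.smul_apply, smul_eq_mul]
      linear_combination (-(B' i' j')) * hcs
    calc frobSq (A - A') + frobSq (B - B')
        = frobSq (A - (c • G' - s • H')) + frobSq (B - (s • G' + c • H')) := by
          rw [← hA', ← hB']
      _ = frobSq (G - G') + frobSq (H - H') := dist_rot c s hcs A B G' H'
  by_cases hHH : H' = H
  · -- second rotated coefficient is already exactly matched; use direction (t', u')
    set E := G - G' with hEdef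
    set q := (α / β)^2 with hq
    have h1q : (0:ℝ) < 1 + q := by positivity
    set ε := 1 / (1 + q) with hε
    set Gn := G' + ε • E with hGn
    set Hn := H - (ε * α / β) • E with hHn
    set C := c • Gn - s • Hn with hCdef
    set D := s • Gn + c • Hn with hDdef
    have hmemb : InBset (2 * k) (2 * k - 1) C D := by
      apply inBset_of_dir C D _ t' u' ht'u'
      have hcomb : t' • C + u' • D = α • Gn + β • Hn := by
        rw [hCdef, hDdef, hα, hβdef]
        ext i' j'
        simp only [Matrix.add_apply, Matrix.sub_apply, Matrix.smul_apply, smul_eq_mul]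
        ring
      have hcomb2 : α • Gn + β • Hn = α • G' + β • H := by
        rw [hGn, hHn]
        ext i' j'
        simp only [Matrix.add_apply, Matrix.sub_apply, Matrix.smul_apply, smul_eq_mul]
        field_simp
        ring
      rw [hcomb, hcomb2, ← hHH, hG'H']
      exact h2
    have hnew : frobSq (A - C) + frobSq (B - D)
        = ((1 - ε)^2 + (ε * α / β)^2) * frobSq E := by
      have hGminus : G - Gn = (1 - ε) • E := by
        rw [hGn, hEdef]
        ext i' j'
        simp only [Matrix.sub_apply, Matrix.add_apply, Matrix.smul_apply, smul_eq_mul]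
        ring
      have hHminus : H - Hn = (ε * α / β) • E := by
        rw [hHn]
        ext i' j'
        simp only [Matrix.sub_apply, Matrix.add_apply, Matrix.smul_apply, smul_eq_mul]
        ring
      calc frobSq (A - C) + frobSq (B - D)
          = frobSq (G - Gn) + frobSq (H - Hn) := dist_rot c s hcs A B Gn Hn
        _ = frobSq ((1 - ε) • E) + frobSq ((ε * α / β) • E) := by rw [hGminus, hHminus]
        _ = ((1 - ε)^2 + (ε * α / β)^2) * frobSq E := by
            rw [frobSq_smul, frobSq_smul]; ring
    have hkey' := hkey C D hmemb
    rw [hold, hnew, hHH, sub_self, frobSq_zero, add_zero] at hkey'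
    have hfrac : (1 - ε)^2 + (ε * α / β)^2 < 1 := by
      have he2 : (ε * α / β)^2 = ε^2 * q := by rw [hq]; ring
      have hval : (1 - ε)^2 + ε^2 * q = q / (1 + q) := by
        rw [hε]
        field_simp
        ring
      rw [he2, hval]
      rw [div_lt_one h1q]
      linarith
    have hpos : 0 < frobSq E := frobSq_pos E hE
    nlinarith
  · -- H' ≠ H : replace the second rotated coefficient by H
    set C := c • G' - s • H with hCdef
    set D := s • G' + c • H with hDdef
    have hmemb : InBset (2 * k) (2 * k - 1) C D := by
      apply inBset_of_dir C D _ c s hcs0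
      have hcomb : c • C + s • D = G' := by
        rw [hCdef, hDdef]
        ext i' j'
        simp only [Matrix.add_apply, Matrix.sub_apply, Matrix.smul_apply, smul_eq_mul]
        linear_combination (G' i' j') * hcs
      rw [hcomb]
      exact hG'rank
    have hnew : frobSq (A - C) + frobSq (B - D) = frobSq (G - G') := by
      calc frobSq (A - C) + frobSq (B - D)
          = frobSq (G - G') + frobSq (H - H) := dist_rot c s hcs A B G' H
        _ = frobSq (G - G') := by rw [sub_self, frobSq_zero, add_zero]
    have hkey' := hkey C D hmemb
    rw [hold, hnew] at hkey'
    have hpos : 0 < frobSq (H - H') := frobSq_pos _ (sub_ne_zero.2 (Ne.symm hHH))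
    linarith

end ImproveB

/-! ### Span helpers -/

lemma notspan_cross {t₀ u₀ t u : ℝ} (h0 : ¬(t₀ = 0 ∧ u₀ = 0))
    (h : ((t, u) : ℝ × ℝ) ∉ Submodule.span ℝ {((t₀, u₀) : ℝ × ℝ)}) :
    t₀ * u - u₀ * t ≠ 0 := by
  intro hz
  apply h
  rw [Submodule.mem_span_singleton]
  rcases not_and_or.1 h0 with h0' | h0'
  · refine ⟨t / t₀, ?_⟩
    have hu : u = u₀ * t / t₀ := by field_simp; linarith
    rw [Prod.smul_mk, Prod.mk.injEq, smul_eq_mul, smul_eq_mul]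
    constructor
    · field_simp
    · rw [hu]; field_simp
  · refine ⟨u / u₀, ?_⟩
    have ht : t = t₀ * u / u₀ := by field_simp; linarith
    rw [Prod.smul_mk, Prod.mk.injEq, smul_eq_mul, smul_eq_mul]
    constructor
    · rw [ht]; field_simp
    · field_simp

lemma perp_notspan {t₀ u₀ : ℝ} (h0 : ¬(t₀ = 0 ∧ u₀ = 0)) :
    ((-u₀, t₀) : ℝ × ℝ) ∉ Submodule.span ℝ {((t₀, u₀) : ℝ × ℝ)} := by
  intro hmem
  rw [Submodule.mem_span_singleton] at hmem
  obtain ⟨a, ha⟩ := hmem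
  rw [Prod.smul_mk, Prod.mk.injEq, smul_eq_mul, smul_eq_mul] at ha
  obtain ⟨ha1, ha2⟩ := ha
  have hsum : t₀^2 + u₀^2 = 0 := by linear_combination u₀ * ha1 - t₀ * ha2
  exact h0 ⟨by nlinarith [sq_nonneg t₀, sq_nonneg u₀], by nlinarith [sq_nonneg t₀, sq_nonneg u₀]⟩

/-! ### Main theorem -/

theorem best_approx_has_minRanks_2k_2km1 (k : ℕ) (hk : 0 < k)
    (A B A' B' : Matrix (Fin (2 * k)) (Fin (2 * k)) ℝ)
    (hC : ∀ t u : ℝ, (t, u) ≠ 0 → IsUnit (t • A + u • B).det)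
    (hmem : InBset (2 * k) (2 * k - 1) A' B')
    (hbest : ∀ C D : Matrix (Fin (2 * k)) (Fin (2 * k)) ℝ,
      InBset (2 * k) (2 * k - 1) C D →
      pdist (A, B) (A', B') ≤ pdist (A, B) (C, D)) :
    MinRanksAre A' B' (2 * k) (2 * k - 1) ∧
    ¬ InBset (2 * k) (2 * k - 2) A' B' ∧
    ¬ InBset (2 * k - 1) (2 * k - 1) A' B' := by
  -- key optimality inequality in squared form
  have hkey : ∀ C D : Matrix (Fin (2 * k)) (Fin (2 * k)) ℝ,
      InBset (2 * k) (2 * k - 1) C D →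
      frobSq (A - A') + frobSq (B - B') ≤ frobSq (A - C) + frobSq (B - D) := by
    intro C D h
    have hb := hbest C D h
    simp only [pdist] at hb
    have h1 : 0 ≤ frobSq (A - A') + frobSq (B - B') :=
      add_nonneg (frobSq_nonneg _) (frobSq_nonneg _)
    have h2 : 0 ≤ frobSq (A - C) + frobSq (B - D) :=
      add_nonneg (frobSq_nonneg _) (frobSq_nonneg _)
    nlinarith [Real.sq_sqrt h1, Real.sq_sqrt h2,
      Real.sqrt_nonneg (frobSq (A - A') + frobSq (B - B')),
      Real.sqrt_nonneg (frobSq (A - C) + frobSq (B - D))]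
  have hle2k : ∀ (M : Matrix (Fin (2*k)) (Fin (2*k)) ℝ), M.rank ≤ 2*k :=
    fun M => le_trans (Matrix.rank_le_card_height M) (by simp)
  have lemA' : ∀ t u : ℝ, ¬(t = 0 ∧ u = 0) → ¬ (t • A' + u • B').rank ≤ 2 * k - 2 :=
    fun t u htu => lemA A B A' B' hk hC hkey t u htu
  have lemB' : ∀ t u t' u' : ℝ, t * u' - u * t' ≠ 0 →
      (t • A' + u • B').rank ≤ 2 * k - 1 → (t' • A' + u' • B').rank ≤ 2 * k - 1 → False :=
    fun t u t' u' hcr h1 h2 => lemB A B A' B' hk hC hkey t u t' u' hcr h1 h2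
  -- extract the rank-deficient direction of (A', B')
  obtain ⟨a, b, t₀, u₀, hcr0, _, hs0⟩ := inBset_dirs A' B' hmem
  have ht₀u₀ : ¬(t₀ = 0 ∧ u₀ = 0) := by
    rintro ⟨rfl, rfl⟩
    simp at hcr0
  refine ⟨⟨t₀, u₀, ?_, ?_, ?_, ⟨-u₀, t₀, perp_notspan ht₀u₀, ?_⟩, ?_⟩, ?_, ?_⟩
  · intro hz
    exact ht₀u₀ (Prod.mk_eq_zero.1 hz)
  · have := lemA' t₀ u₀ ht₀u₀
    omega
  · intro t u htu
    have := lemA' t u (fun h => htu (by rw [h.1, h.2]; rfl))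
    omega
  · have hcr : t₀ * t₀ - u₀ * (-u₀) ≠ 0 := by
      intro hz
      have h2 : t₀^2 + u₀^2 = 0 := by linarith [sq_nonneg t₀]; 
      exact ht₀u₀ ⟨by nlinarith [sq_nonneg t₀, sq_nonneg u₀],
        by nlinarith [sq_nonneg t₀, sq_nonneg u₀]⟩
    have hnot : ¬ ((-u₀) • A' + t₀ • B').rank ≤ 2 * k - 1 := by
      intro hle
      exact lemB' t₀ u₀ (-u₀) t₀ hcr hs0 hle
    have := hle2k ((-u₀) • A' + t₀ • B')
    omega
  · intro t u hspan
    have hcr : t₀ * u - u₀ * t ≠ 0 := notspan_cross ht₀u₀ hspan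
    have hnot : ¬ (t • A' + u • B').rank ≤ 2 * k - 1 := by
      intro hle
      exact lemB' t₀ u₀ t u hcr hs0 hle
    omega
  · intro h
    obtain ⟨a, b, a', b', hcr, _, hs⟩ := inBset_dirs A' B' h
    have ha'b' : ¬(a' = 0 ∧ b' = 0) := by
      rintro ⟨rfl, rfl⟩
      simp at hcr
    exact lemA' a' b' ha'b' hs
  · intro h
    obtain ⟨a, b, a', b', hcr, hr, hs⟩ := inBset_dirs A' B' h
    exact lemB' a b a' b' hcr hr hs
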